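/- Let A, B, M be real symmetric positive definite d×d matrices and U a real symmetric d×d matrix. Let λ_{a,−} and λ_{b,−} denote the smallest eigenvalues of A and B respectively, and suppose λ_−·I ⪯ M ⪯ λ_+·I with λ_−, λ_+ > 0. Then (1/2)·tr( M⁻¹ U M⁻¹ (U A M + M A U + U M⁻¹ B + B M⁻¹ U) ) ≥ (λ_{a,−} λ_− + λ_{b,−} λ_− / λ_+²) · tr( M⁻¹ U M⁻¹ U ). -/

import Mathlib

open Matrix
open scoped MatrixOrder

section Aux
variable {n : Type*} [Fintype n] [DecidableEq n]

lemma psd_trace_nonneg {P : Matrix n n ℝ} (hP : P.PosSemidef) : 0 ≤ P.trace := by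
  apply Finset.sum_nonneg
  intro i _
  simpa using hP.dotProduct_mulVec_nonneg (Pi.single i 1)

lemma psd_smul {c : ℝ} (hc : 0 ≤ c) {P : Matrix n n ℝ} (hP : P.PosSemidef) :
    (c • P).PosSemidef := by
  exact hP.smul hc

lemma psd_trace_mul_nonneg {P Q : Matrix n n ℝ} (hP : P.PosSemidef) (hQ : Q.PosSemidef) :
    0 ≤ (P * Q).trace := by
  have h : (P * Q).trace = (CFC.sqrt P * Q * (CFC.sqrt P)ᴴ).trace := by
    rw [(CFC.sqrt_nonneg P).posSemidef.1.eq]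
    conv_rhs => rw [trace_mul_cycle, CFC.sqrt_mul_sqrt_self P hP.nonneg]
  rw [h]
  exact psd_trace_nonneg (hQ.mul_mul_conjTranspose_same (CFC.sqrt P))

lemma sub_inf_eig_psd {A : Matrix n n ℝ} (hA : A.IsHermitian) :
    (A - (⨅ i, hA.eigenvalues i) • (1 : Matrix n n ℝ)).PosSemidef := by
  set c := ⨅ i, hA.eigenvalues i with hc
  have hu : (hA.eigenvectorUnitary : Matrix n n ℝ) *
      star (hA.eigenvectorUnitary : Matrix n n ℝ) = 1 :=
    (Matrix.mem_unitaryGroup_iff).mp hA.eigenvectorUnitary.2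
  have key : A - c • 1 = (hA.eigenvectorUnitary : Matrix n n ℝ) *
      diagonal (fun i => hA.eigenvalues i - c) *
      (hA.eigenvectorUnitary : Matrix n n ℝ)ᴴ := by
    have hd : diagonal (fun i => hA.eigenvalues i - c) =
        diagonal (RCLike.ofReal ∘ hA.eigenvalues) - c • (1 : Matrix n n ℝ) := by
      rw [Matrix.smul_one_eq_diagonal, ← diagonal_sub]
      rfl
    rw [hd, Matrix.mul_sub, Matrix.sub_mul, ← Matrix.star_eq_conjTranspose,
      ← Unitary.conjStarAlgAut_apply (S := ℝ), ← hA.spectral_theorem]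
    congr 1
    rw [Matrix.mul_smul, Matrix.smul_mul, mul_one, hu]
  rw [key]
  refine PosSemidef.mul_mul_conjTranspose_same ?_ _
  refine PosSemidef.diagonal fun i => ?_
  exact sub_nonneg.2 (ciInf_le (Finite.bddBelow_range _) i)

lemma inv_bounds {M : Matrix n n ℝ} (hM : M.PosDef) {lm lp : ℝ} (hlm : 0 < lm) (hlp : 0 < lp)
    (hlow : (M - lm • (1 : Matrix n n ℝ)).PosSemidef)
    (hup : (lp • (1 : Matrix n n ℝ) - M).PosSemidef) :
    (lm⁻¹ • (1 : Matrix n n ℝ) - M⁻¹).PosSemidef ∧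
    (M⁻¹ - lp⁻¹ • (1 : Matrix n n ℝ)).PosSemidef := by
  set S := CFC.sqrt M with hS
  have hSpsd : S.PosSemidef := (CFC.sqrt_nonneg M).posSemidef
  have hSS : S * S = M := CFC.sqrt_mul_sqrt_self M hM.posSemidef.nonneg
  have hdet : IsUnit S.det := by
    have h2 : S.det * S.det = M.det := by rw [← det_mul, hSS]
    have : M.det ≠ 0 := hM.det_pos.ne'
    exact isUnit_iff_ne_zero.2 (fun h => this (by rw [← h2, h, mul_zero]))
  have hS1 : S⁻¹ * S = 1 := nonsing_inv_mul S hdet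
  have hS2 : S * S⁻¹ = 1 := mul_nonsing_inv S hdet
  have hSinvH : S⁻¹ᴴ = S⁻¹ := by rw [conjTranspose_nonsing_inv, hSpsd.1.eq]
  have hMinv : M⁻¹ = S⁻¹ * S⁻¹ := by rw [← hSS, Matrix.mul_inv_rev]
  have hSMS : S⁻¹ * M * S⁻¹ = 1 := by
    rw [← hSS, ← Matrix.mul_assoc S⁻¹ S S, hS1, one_mul, hS2]
  have hconj : ∀ Y : Matrix n n ℝ, Y.PosSemidef → (S⁻¹ * Y * S⁻¹).PosSemidef := by
    intro Y hY
    have := hY.mul_mul_conjTranspose_same S⁻¹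
    rwa [hSinvH] at this
  constructor
  · have e1 : S⁻¹ * (lm⁻¹ • (M - lm • 1)) * S⁻¹ = lm⁻¹ • (1 : Matrix n n ℝ) - M⁻¹ := by
      rw [Matrix.mul_smul, Matrix.smul_mul, Matrix.mul_sub, Matrix.sub_mul, Matrix.mul_smul,
        Matrix.smul_mul, mul_one, hSMS, smul_sub, smul_smul, inv_mul_cancel₀ hlm.ne',
        one_smul, hMinv]
    rw [← e1]
    exact hconj _ (psd_smul (by positivity) hlow)
  · have e2 : S⁻¹ * (lp⁻¹ • (lp • 1 - M)) * S⁻¹ = M⁻¹ - lp⁻¹ • (1 : Matrix n n ℝ) := by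
      rw [Matrix.mul_smul, Matrix.smul_mul, Matrix.mul_sub, Matrix.sub_mul, Matrix.mul_smul,
        Matrix.smul_mul, mul_one, hSMS, smul_sub, smul_smul, inv_mul_cancel₀ hlp.ne',
        one_smul, hMinv]
    rw [← e2]
    exact hconj _ (psd_smul (by positivity) hup)

end Aux

set_option maxHeartbeats 1000000 in
/-- Let `A`, `B`, `M` be real symmetric positive definite `d×d` matrices and
`U` a real symmetric matrix. With `λ_{a,−}`, `λ_{b,−}` the smallest eigenvalues of `A`, `B`
and `λ_−·I ⪯ M ⪯ λ_+·I` (`λ_−, λ_+ > 0`),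
`(1/2)·tr(M⁻¹UM⁻¹(UAM + MAU + UM⁻¹B + BM⁻¹U)) ≥ (λ_{a,−}λ_− + λ_{b,−}λ_−/λ_+²)·tr(M⁻¹UM⁻¹U)`. -/
theorem statement17 {d : ℕ} (A B M U : Matrix (Fin d) (Fin d) ℝ)
    (hA : A.PosDef) (hB : B.PosDef) (hM : M.PosDef) (hU : U.IsSymm)
    (lm lp : ℝ) (hlm : 0 < lm) (hlp : 0 < lp)
    (hlow : (M - lm • (1 : Matrix (Fin d) (Fin d) ℝ)).PosSemidef)
    (hup : (lp • (1 : Matrix (Fin d) (Fin d) ℝ) - M).PosSemidef) :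
    ((⨅ i, hA.1.eigenvalues i) * lm + (⨅ i, hB.1.eigenvalues i) * lm / lp ^ 2) *
        (M⁻¹ * U * M⁻¹ * U).trace ≤
      1 / 2 * (M⁻¹ * U * M⁻¹ * (U * A * M + M * A * U + U * M⁻¹ * B + B * M⁻¹ * U)).trace := by
  rcases Nat.eq_zero_or_pos d with hd | hd
  · subst hd
    simp [Matrix.trace]
  haveI : Nonempty (Fin d) := ⟨⟨0, hd⟩⟩
  set ea := ⨅ i, hA.1.eigenvalues i with hea_def
  set eb := ⨅ i, hB.1.eigenvalues i with heb_def
  have hea : 0 ≤ ea := Real.iInf_nonneg fun i => hA.posSemidef.eigenvalues_nonneg i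
  have heb : 0 ≤ eb := Real.iInf_nonneg fun i => hB.posSemidef.eigenvalues_nonneg i
  -- lm ≤ lp
  have hlmlp : lm ≤ lp := by
    have hsum : (M - lm • (1 : Matrix (Fin d) (Fin d) ℝ)) + (lp • 1 - M)
        = (lp - lm) • (1 : Matrix (Fin d) (Fin d) ℝ) := by
      rw [sub_smul]; abel
    have h := (hlow.add hup).dotProduct_mulVec_nonneg (Pi.single ⟨0, hd⟩ 1)
    rw [hsum] at h
    simp [smul_mulVec, dotProduct_smul] at h
    linarith
  -- basic PSD facts
  have hUherm : U.IsHermitian := by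
    rw [Matrix.IsHermitian, conjTranspose_eq_transpose_of_trivial]
    exact hU
  have hMdet : IsUnit M.det := hM.det_pos.ne'.isUnit
  have hMN : M * M⁻¹ = 1 := mul_nonsing_inv M hMdet
  have hNM : M⁻¹ * M = 1 := nonsing_inv_mul M hMdet
  have hN : (M⁻¹).PosSemidef := hM.posSemidef.inv
  have hNh : (M⁻¹)ᴴ = M⁻¹ := hN.1.eq
  have hP : (U * M⁻¹ * U).PosSemidef := by
    have := hN.mul_mul_conjTranspose_same U
    rwa [hUherm.eq] at this
  have hNPN : (M⁻¹ * (U * M⁻¹ * U) * M⁻¹).PosSemidef := by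
    have := hP.mul_mul_conjTranspose_same M⁻¹
    rwa [hNh] at this
  obtain ⟨hQ1, hW⟩ := inv_bounds hM hlm hlp hlow hup
  have hWW : ((M⁻¹ - lp⁻¹ • 1) * (M⁻¹ - lp⁻¹ • 1)).PosSemidef := by
    have := Matrix.posSemidef_conjTranspose_mul_self (M⁻¹ - lp⁻¹ • 1)
    rwa [hW.1.eq] at this
  -- trace identities for the four summands
  have a1 : (M⁻¹ * U * M⁻¹ * (U * A * M)).trace = ((U * M⁻¹ * U) * A).trace := by
    rw [show M⁻¹ * U * M⁻¹ * (U * A * M) = (M⁻¹ * U * M⁻¹ * U * A) * M by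
      simp only [Matrix.mul_assoc], trace_mul_comm,
      show M * (M⁻¹ * U * M⁻¹ * U * A) = (M * M⁻¹) * (U * M⁻¹ * U * A) by
      simp only [Matrix.mul_assoc], hMN, one_mul]
  have a2 : (M⁻¹ * U * M⁻¹ * (M * A * U)).trace = ((U * M⁻¹ * U) * A).trace := by
    rw [show M⁻¹ * U * M⁻¹ * (M * A * U) = (M⁻¹ * U) * ((M⁻¹ * M) * (A * U)) by
      simp only [Matrix.mul_assoc], hNM, one_mul, trace_mul_comm,
      show (A * U) * (M⁻¹ * U) = A * (U * M⁻¹ * U) by simp only [Matrix.mul_assoc],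
      trace_mul_comm]
  have a3 : (M⁻¹ * U * M⁻¹ * (U * M⁻¹ * B)).trace
      = ((M⁻¹ * (U * M⁻¹ * U) * M⁻¹) * B).trace := by
    congr 1
    simp only [Matrix.mul_assoc]
  have a4 : (M⁻¹ * U * M⁻¹ * (B * M⁻¹ * U)).trace
      = ((M⁻¹ * (U * M⁻¹ * U) * M⁻¹) * B).trace := by
    rw [show M⁻¹ * U * M⁻¹ * (B * M⁻¹ * U) = (M⁻¹ * U * M⁻¹ * B * M⁻¹) * U by
      simp only [Matrix.mul_assoc], trace_mul_comm,
      show U * (M⁻¹ * U * M⁻¹ * B * M⁻¹) = (U * M⁻¹ * U * M⁻¹ * B) * M⁻¹ by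
      simp only [Matrix.mul_assoc], trace_mul_comm]
    congr 1
    simp only [Matrix.mul_assoc]
  have hL : (M⁻¹ * U * M⁻¹ * U).trace = ((U * M⁻¹ * U) * M⁻¹).trace := by
    rw [trace_mul_comm]
    congr 1
    simp only [Matrix.mul_assoc]
  -- scalar abbreviations
  set TP := (U * M⁻¹ * U).trace with hTP_def
  set TPN := ((U * M⁻¹ * U) * M⁻¹).trace with hTPN_def
  set TPA := ((U * M⁻¹ * U) * A).trace with hTPA_def
  set TNPNB := ((M⁻¹ * (U * M⁻¹ * U) * M⁻¹) * B).trace with hTNPNB_def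
  set TPNN := ((U * M⁻¹ * U) * (M⁻¹ * M⁻¹)).trace with hTPNN_def
  -- inequality 1 : ea * TP ≤ TPA
  have i1 : ea * TP ≤ TPA := by
    have h := psd_trace_mul_nonneg hP (sub_inf_eig_psd hA.1)
    rw [Matrix.mul_sub, Matrix.mul_smul, mul_one, trace_sub, trace_smul] at h
    simp only [smul_eq_mul] at h
    linarith
  -- inequality 2 : lm * TPN ≤ TP
  have i2 : lm * TPN ≤ TP := by
    have h := psd_trace_mul_nonneg hP hQ1
    rw [Matrix.mul_sub, Matrix.mul_smul, mul_one, trace_sub, trace_smul] at h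
    simp only [smul_eq_mul] at h
    have h' : TPN ≤ lm⁻¹ * TP := by linarith
    calc lm * TPN ≤ lm * (lm⁻¹ * TP) := by
          exact mul_le_mul_of_nonneg_left h' hlm.le
      _ = TP := by field_simp
  -- inequality 3 : eb * TPNN ≤ TNPNB
  have i3 : eb * TPNN ≤ TNPNB := by
    have h := psd_trace_mul_nonneg hNPN (sub_inf_eig_psd hB.1)
    rw [Matrix.mul_sub, Matrix.mul_smul, mul_one, trace_sub, trace_smul] at h
    simp only [smul_eq_mul] at h
    have hcyc : (M⁻¹ * (U * M⁻¹ * U) * M⁻¹).trace = TPNN := by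
      rw [trace_mul_cycle, trace_mul_comm]
    rw [hcyc] at h
    linarith
  -- inequality 4 : (lm / lp^2) * TPN ≤ TPNN
  have i4 : (lm / lp ^ 2) * TPN ≤ TPNN := by
    have idW : M⁻¹ * M⁻¹ = (M⁻¹ - lp⁻¹ • 1) * (M⁻¹ - lp⁻¹ • 1)
        + ((2 * lp - lm) / lp ^ 2) • (M⁻¹ - lp⁻¹ • 1)
        + ((lp - lm) / lp ^ 3) • (1 : Matrix (Fin d) (Fin d) ℝ)
        + (lm / lp ^ 2) • M⁻¹ := by
      simp only [Matrix.sub_mul, Matrix.mul_sub, Matrix.smul_mul, Matrix.mul_smul,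
        one_mul, mul_one, smul_smul]
      match_scalars <;> field_simp <;> ring
    have := congrArg (fun X => ((U * M⁻¹ * U) * X).trace) idW
    simp only [Matrix.mul_add, trace_add, Matrix.mul_smul, trace_smul, smul_eq_mul] at this
    have t1 : 0 ≤ ((U * M⁻¹ * U) * ((M⁻¹ - lp⁻¹ • 1) * (M⁻¹ - lp⁻¹ • 1))).trace :=
      psd_trace_mul_nonneg hP hWW
    have t2 : 0 ≤ ((U * M⁻¹ * U) * (M⁻¹ - lp⁻¹ • 1)).trace :=
      psd_trace_mul_nonneg hP hW
    have t3 : 0 ≤ TP := by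
      have := psd_trace_mul_nonneg hP (Matrix.PosSemidef.one)
      rwa [mul_one] at this
    have c1 : 0 ≤ (2 * lp - lm) / lp ^ 2 := by
      apply div_nonneg (by linarith) (by positivity)
    have c2 : 0 ≤ (lp - lm) / lp ^ 3 := by
      apply div_nonneg (by linarith) (by positivity)
    rw [hTPNN_def]
    rw [this]
    rw [mul_one]
    nlinarith [mul_nonneg c1 t2, mul_nonneg c2 t3]
  -- put everything together
  simp only [Matrix.mul_add, trace_add]
  rw [hL, a1, a2, a3, a4]
  have g1 : ea * (lm * TPN) ≤ ea * TP := mul_le_mul_of_nonneg_left i2 hea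
  have g2 : eb * (lm / lp ^ 2 * TPN) ≤ eb * TPNN := mul_le_mul_of_nonneg_left i4 heb
  calc (ea * lm + eb * lm / lp ^ 2) * TPN
      = ea * (lm * TPN) + eb * (lm / lp ^ 2 * TPN) := by ring
    _ ≤ ea * TP + eb * TPNN := add_le_add g1 g2
    _ ≤ TPA + TNPNB := add_le_add i1 i3
    _ = 1 / 2 * (TPA + TPA + TNPNB + TNPNB) := by ring
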